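/- If the n×n matrix functions A(x), S(x), and the n×m matrix function Π(x) satisfy the ODEs A_x = A², Π_x = -iAΠJH, S_x = ΠJHJ*Π* - (AS + SA*) with H(x) Hermitian and J Hermitian with J² = I, and the identity A(0)S(0) - S(0)A(0)* = iΠ(0)JΠ(0)* holds at x = 0, then the identity A(x)S(x) - S(x)A(x)* = iΠ(x)JΠ(x)* holds for all x. -/

import Mathlib

open Matrix ComplexConjugate

/-- Entrywise derivative of a matrix product. -/
lemma hd_mul {k p q : ℕ} {f : ℝ → Matrix (Fin k) (Fin p) ℂ} {g : ℝ → Matrix (Fin p) (Fin q) ℂ}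
    {f' : Matrix (Fin k) (Fin p) ℂ} {g' : Matrix (Fin p) (Fin q) ℂ} {x : ℝ}
    (hf : ∀ i j, HasDerivAt (fun t => f t i j) (f' i j) x)
    (hg : ∀ i j, HasDerivAt (fun t => g t i j) (g' i j) x) :
    ∀ i j, HasDerivAt (fun t => (f t * g t) i j) ((f' * g x + f x * g') i j) x := by
  intro i j
  have h1 : (fun t => (f t * g t) i j) = fun t => ∑ c, f t i c * g t c j := by
    funext t; simp [Matrix.mul_apply]
  rw [h1]
  have h2 : (f' * g x + f x * g') i j = ∑ c, (f' i c * g x c j + f x i c * g' c j) := by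
    simp [Matrix.mul_apply, Matrix.add_apply, Finset.sum_add_distrib]
  rw [h2]
  exact HasDerivAt.fun_sum fun c _ => (hf i c).mul (hg c j)

/-- Entrywise derivative of the conjugate transpose. -/
lemma hd_ct {k p : ℕ} {f : ℝ → Matrix (Fin k) (Fin p) ℂ} {f' : Matrix (Fin k) (Fin p) ℂ} {x : ℝ}
    (hf : ∀ i j, HasDerivAt (fun t => f t i j) (f' i j) x) :
    ∀ i j, HasDerivAt (fun t => (f t)ᴴ i j) (f'ᴴ i j) x := by
  intro i j
  have h1 : (fun t => (f t)ᴴ i j) = fun t => star (f t j i) := by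
    funext t; simp [Matrix.conjTranspose_apply]
  rw [h1]
  simpa [Matrix.conjTranspose_apply] using (hf j i).star

/-- The algebraic cancellation: the derivative of `A S - S Aᴴ - i P J Pᴴ` vanishes. -/
lemma cancel {m n : ℕ} (j h : Matrix (Fin m) (Fin m) ℂ) (hj : jᴴ = j) (hh : hᴴ = h)
    (a s : Matrix (Fin n) (Fin n) ℂ) (p : Matrix (Fin n) (Fin m) ℂ) :
    (a * a * s + a * (p * j * h * jᴴ * pᴴ - (a * s + s * aᴴ)))
    - ((p * j * h * jᴴ * pᴴ - (a * s + s * aᴴ)) * aᴴ + s * (a * a)ᴴ)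
    - Complex.I • ((((-Complex.I) • (a * p * j * h)) * j + p * (0 : Matrix (Fin m) (Fin m) ℂ)) * pᴴ
        + (p * j) * ((-Complex.I) • (a * p * j * h))ᴴ) = 0 := by
  have e1 : ((-Complex.I) • (a * p * j * h))ᴴ = Complex.I • (h * (j * (pᴴ * aᴴ))) := by
    simp [conjTranspose_smul, conjTranspose_mul, hj, hh, Matrix.mul_assoc]
  rw [e1]
  have e2 : Complex.I • ((((-Complex.I) • (a * p * j * h)) * j + p * (0 : Matrix (Fin m) (Fin m) ℂ)) * pᴴ
      + (p * j) * (Complex.I • (h * (j * (pᴴ * aᴴ)))))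
      = a * p * j * h * j * pᴴ - p * j * h * j * pᴴ * aᴴ := by
    simp only [Matrix.mul_zero, add_zero, smul_mul_assoc, Matrix.mul_smul, smul_add, smul_smul]
    simp only [Complex.I_mul_I, mul_neg, neg_neg, neg_smul, one_smul, Matrix.mul_assoc,
      sub_eq_add_neg, smul_smul]
    simp [Matrix.mul_assoc]
    rw [smul_smul, Complex.I_mul_I]
    simp
  rw [e2]
  simp only [conjTranspose_mul, hj]
  noncomm_ring
  simp [Matrix.mul_assoc]

/-- If A_x = A², Π_x = -iAΠJH, S_x = ΠJHJ*Π* - (AS+SA*), H Hermitian, J Hermitian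
with J² = I, and A(0)S(0) - S(0)A(0)* = iΠ(0)JΠ(0)*, then
A(x)S(x) - S(x)A(x)* = iΠ(x)JΠ(x)* for all x in the interval. -/
theorem matrix_identity_propagates {m n : ℕ} (l : ℝ) (hl : 0 ≤ l)
    (J : Matrix (Fin m) (Fin m) ℂ) (hJ : Jᴴ = J) (hJ2 : J * J = 1)
    (H : ℝ → Matrix (Fin m) (Fin m) ℂ) (hH : ∀ x, (H x)ᴴ = H x)
    (A S : ℝ → Matrix (Fin n) (Fin n) ℂ) (P : ℝ → Matrix (Fin n) (Fin m) ℂ)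
    (hA : ∀ x ∈ Set.Icc 0 l, ∀ i j, HasDerivAt (fun t => A t i j) ((A x * A x) i j) x)
    (hP : ∀ x ∈ Set.Icc 0 l, ∀ i j, HasDerivAt (fun t => P t i j)
      (((-Complex.I) • (A x * P x * J * H x)) i j) x)
    (hS : ∀ x ∈ Set.Icc 0 l, ∀ i j, HasDerivAt (fun t => S t i j)
      ((P x * J * H x * Jᴴ * (P x)ᴴ - (A x * S x + S x * (A x)ᴴ)) i j) x)
    (hS0 : (S 0)ᴴ = S 0)
    (h0 : A 0 * S 0 - S 0 * (A 0)ᴴ = Complex.I • (P 0 * J * (P 0)ᴴ)) :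
    ∀ x ∈ Set.Icc 0 l, A x * S x - S x * (A x)ᴴ = Complex.I • (P x * J * (P x)ᴴ) := by
  set F : ℝ → Matrix (Fin n) (Fin n) ℂ :=
    fun t => A t * S t - S t * (A t)ᴴ - Complex.I • (P t * J * (P t)ᴴ) with hF
  have key : ∀ x ∈ Set.Icc 0 l, ∀ i j, HasDerivAt (fun t => F t i j) 0 x := by
    intro x hx i j
    have hJ0 : ∀ i j, HasDerivAt (fun _ : ℝ => J i j)
        ((0 : Matrix (Fin m) (Fin m) ℂ) i j) x := fun i j => by
      simpa using hasDerivAt_const x (J i j)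
    have h1 := hd_mul (hA x hx) (hS x hx)
    have h2 := hd_mul (hS x hx) (hd_ct (hA x hx))
    have h3 := hd_mul (hd_mul (hP x hx) hJ0) (hd_ct (hP x hx))
    have h4 : HasDerivAt (fun t => (Complex.I • (P t * J * (P t)ᴴ)) i j)
        ((Complex.I • ((((-Complex.I) • (A x * P x * J * H x)) * J
            + P x * (0 : Matrix (Fin m) (Fin m) ℂ)) * (P x)ᴴ
          + (P x * J) * ((-Complex.I) • (A x * P x * J * H x))ᴴ)) i j) x := by
      simpa [Matrix.smul_apply, smul_eq_mul] using (h3 i j).const_mul Complex.I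
    have h5 := ((h1 i j).fun_sub (h2 i j)).fun_sub h4
    have h6 : HasDerivAt (fun t => F t i j)
        ((((A x * A x) * S x + A x * (P x * J * H x * Jᴴ * (P x)ᴴ - (A x * S x + S x * (A x)ᴴ)))
          - ((P x * J * H x * Jᴴ * (P x)ᴴ - (A x * S x + S x * (A x)ᴴ)) * (A x)ᴴ
              + S x * (A x * A x)ᴴ)
          - Complex.I • ((((-Complex.I) • (A x * P x * J * H x)) * J
              + P x * (0 : Matrix (Fin m) (Fin m) ℂ)) * (P x)ᴴ
            + (P x * J) * ((-Complex.I) • (A x * P x * J * H x))ᴴ)) i j) x := by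
      simpa only [hF, Matrix.sub_apply] using h5
    rw [cancel J (H x) hJ (hH x) (A x) (S x) (P x)] at h6
    simpa using h6
  have hconst : ∀ x ∈ Set.Icc 0 l, ∀ i j, F x i j = F 0 i j := by
    intro x hx i j
    exact constant_of_has_deriv_right_zero
      (fun y hy => ((key y hy i j).continuousAt).continuousWithinAt)
      (fun y hy => ((key y (Set.Ico_subset_Icc_self hy) i j).hasDerivWithinAt)) x hx
  intro x hx
  have hF0 : F 0 = 0 := by
    rw [hF]; simp only []
    rw [sub_eq_zero]
    exact h0
  have : F x = 0 := by
    ext i j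
    rw [hconst x hx i j, hF0]
  have := sub_eq_zero.mp this
  exact this
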